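/- Binary-search invariant for locating the left boundary: let b_1,...,b_n be a monotone boolean sequence derived from the sorted suffix array, where b_i = −1 if t[suf_i, min(n, suf_i + |u| − 1)] < u, b_i = 0 if equal, b_i = 1 if greater (with respect to lexicographic comparison of the length-|u| prefix). Then the sequence (b_i) is non-decreasing in i. -/

import Mathlib

private lemma lex_take_le_take {α : Type*} [LinearOrder α] :
    ∀ (k : ℕ) {l l' : List α}, List.Lex (· < ·) l l' →
      l.take k ≤ l'.take k := by
  intro k l l' h
  induction h generalizing k with
  | nil =>
    rename_i a0 l0
    rw [List.take_nil]
    generalize List.take k (a0 :: l0) = m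
    rcases m with _ | ⟨b, l⟩
    · exact le_refl ([] : List α)
    · exact le_of_lt (show List.Lex (· < ·) _ _ from List.Lex.nil)
  | @cons a l₁ l₂ h ih =>
    cases k with
    | zero => simp
    | succ k =>
      rcases (ih k).lt_or_eq with h' | h'
      · have hlex : List.Lex (· < ·) (l₁.take k) (l₂.take k) := h'
        exact le_of_lt (show List.Lex (· < ·) _ _ from List.Lex.cons hlex)
      · simp [List.take_succ_cons, h']
  | @rel a b l₁ l₂ hab =>
    cases k with
    | zero => simp
    | succ k =>
      exact le_of_lt (show List.Lex (· < ·) _ _ from List.Lex.rel hab)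

theorem stmt15 {α : Type*} [LinearOrder α] (t : List α)
    (suf : Equiv.Perm (Fin t.length))
    (hsorted : ∀ i j : Fin t.length, i < j →
      t.drop (suf i : ℕ) < t.drop (suf j : ℕ))
    (u : List α) (i j : Fin t.length) (hij : i ≤ j) :
    ((t.drop (suf j : ℕ)).take u.length < u →
      (t.drop (suf i : ℕ)).take u.length < u) ∧
    (u < (t.drop (suf i : ℕ)).take u.length →
      u < (t.drop (suf j : ℕ)).take u.length) := by
  rcases hij.lt_or_eq with hlt | rfl
  · have h := hsorted i j hlt
    have h' : (t.drop (suf i : ℕ)).take u.length ≤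
        (t.drop (suf j : ℕ)).take u.length :=
      lex_take_le_take u.length h
    exact ⟨fun hj => lt_of_le_of_lt h' hj, fun hi => lt_of_lt_of_le hi h'⟩
  · exact ⟨id, id⟩
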